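/- Suppose 0 < α < 1/λ₁, λ_k > λ_{k+1}, and z_k^(t) ≠ 0 at some time t. Then z_k^(t+1) ≠ 0, and for every l ∈ {k+1, ..., d} the coefficient ratios contract by the factor ρ_k = ((1 + αλ_{k+1})/(1 + αλ_k))² < 1: (z_l^(t+1)/z_k^(t+1))² ≤ ρ_k (z_l^(t)/z_k^(t))². -/

import Mathlib

set_option autoImplicit false

open scoped RealInnerProductSpace

/-- `matVec A v` is the matrix-vector product `A v`, viewed as a map on Euclidean space. -/
noncomputable def matVec {n : ℕ} (A : Matrix (Fin n) (Fin n) ℝ)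
    (v : EuclideanSpace ℝ (Fin n)) : EuclideanSpace ℝ (Fin n) :=
  WithLp.toLp 2 (A.mulVec v)

lemma matVec_adjoint {d : ℕ} (C : Matrix (Fin d) (Fin d) ℝ) (h : C.IsSymm)
    (u v : EuclideanSpace ℝ (Fin d)) : ⟪matVec C u, v⟫ = ⟪u, matVec C v⟫ := by
  simp only [matVec, PiLp.inner_apply, RCLike.inner_apply, starRingEnd_apply, star_trivial, PiLp.toLp_apply,
    Matrix.mulVec, dotProduct, Finset.sum_mul, Finset.mul_sum]
  rw [Finset.sum_comm]
  refine Finset.sum_congr rfl fun i _ => Finset.sum_congr rfl fun j _ => ?_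
  rw [← h.apply i j]
  ring

lemma rayleigh_bound {d : ℕ} (C : Matrix (Fin d) (Fin d) ℝ) (hCsymm : C.IsSymm)
    (lam : Fin d → ℝ) (q : Fin d → EuclideanSpace ℝ (Fin d))
    (hq : Orthonormal ℝ q)
    (heig : ∀ l, matVec C (q l) = lam l • q l)
    (hd : 0 < d)
    (hnn : ∀ l, 0 ≤ lam l) (lmax : ℝ) (hmax : ∀ l, lam l ≤ lmax)
    (y : EuclideanSpace ℝ (Fin d)) :
    0 ≤ ⟪y, matVec C y⟫ ∧ ⟪y, matVec C y⟫ ≤ lmax * ‖y‖ ^ 2 := by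
  have hcard : Fintype.card (Fin d) = Module.finrank ℝ (EuclideanSpace ℝ (Fin d)) := by simp
  haveI : Nonempty (Fin d) := ⟨⟨0, hd⟩⟩
  have hsp : Submodule.span ℝ (Set.range q) = ⊤ :=
    hq.linearIndependent.span_eq_top_of_card_eq_finrank hcard
  let b : OrthonormalBasis (Fin d) ℝ (EuclideanSpace ℝ (Fin d)) :=
    OrthonormalBasis.mk hq hsp.ge
  have hb : ⇑b = q := OrthonormalBasis.coe_mk hq hsp.ge
  have hrep : ∑ i, ⟪q i, y⟫ • q i = y := by
    conv_rhs => rw [← b.sum_repr' y]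
    simp [hb]
  have hQ : ⟪y, matVec C y⟫ = ∑ i, lam i * ⟪q i, y⟫ ^ 2 := by
    calc ⟪y, matVec C y⟫ = ⟪(∑ i, ⟪q i, y⟫ • q i : EuclideanSpace ℝ (Fin d)), matVec C y⟫ := by
          rw [hrep]
      _ = ∑ i, lam i * ⟪q i, y⟫ ^ 2 := by
          rw [sum_inner]
          refine Finset.sum_congr rfl fun i _ => ?_
          rw [real_inner_smul_left, ← matVec_adjoint C hCsymm, heig, real_inner_smul_left]
          ring
  have hN : ‖y‖ ^ 2 = ∑ i, ⟪q i, y⟫ ^ 2 := by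
    have := b.sum_inner_mul_inner y y
    rw [real_inner_self_eq_norm_sq] at this
    rw [← this]
    refine Finset.sum_congr rfl fun i _ => ?_
    rw [hb, real_inner_comm y (q i)]
    ring
  constructor
  · rw [hQ]
    exact Finset.sum_nonneg fun i _ => mul_nonneg (hnn i) (sq_nonneg _)
  · rw [hQ, hN, Finset.mul_sum]
    exact Finset.sum_le_sum fun i _ => mul_le_mul_of_nonneg_right (hmax i) (sq_nonneg _)

/-- one-step contraction of the higher-order coefficient ratios
`(z_l/z_k)²` by the factor `ρ_k = ((1+αλ_{k+1})/(1+αλ_k))² < 1`.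
Indices are 0-based: the 1-based eigenvalue `λ_j` is `lam ⟨j-1, _⟩`, so the 1-based range
`l ∈ {k+1, …, d}` corresponds to the 0-based indices `l` with `k ≤ (l : ℕ)`. -/
theorem krasulina_upper_ratio_contraction
    {d : ℕ}
    (C : Matrix (Fin d) (Fin d) ℝ) (hCsymm : C.IsSymm) (hCpsd : C.PosSemidef)
    (lam : Fin d → ℝ) (q : Fin d → EuclideanSpace ℝ (Fin d))
    (hq : Orthonormal ℝ q)
    (heig : ∀ l, matVec C (q l) = lam l • q l)
    (hmono : ∀ i j : Fin d, i ≤ j → lam j ≤ lam i)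
    (hnn : ∀ l, 0 ≤ lam l)
    (k : ℕ) (hk1 : 1 ≤ k) (hkd : k < d)
    (α : ℝ) (hα0 : 0 < α) (hα : α < 1 / lam ⟨0, by omega⟩)
    (hgap : lam ⟨k, by omega⟩ < lam ⟨k - 1, by omega⟩)
    (x : ℕ → EuclideanSpace ℝ (Fin d)) (hxnz : ∀ t, x t ≠ 0)
    (hupd : ∀ t, x (t + 1) = x t + α •
      (matVec C (x t) - (⟪x t, matVec C (x t)⟫ / ‖x t‖ ^ 2) • x t -
        ∑ p : Fin (k - 1),
          (lam (Fin.castLE (by omega) p) * ⟪q (Fin.castLE (by omega) p), x t⟫) •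
            q (Fin.castLE (by omega) p)))
    (t : ℕ) (hzk : ⟪q ⟨k - 1, by omega⟩, ‖x t‖⁻¹ • x t⟫ ≠ 0)
    (ρ : ℝ) (hρ : ρ = ((1 + α * lam ⟨k, by omega⟩) / (1 + α * lam ⟨k - 1, by omega⟩)) ^ 2) :
    ρ < 1 ∧ ⟪q ⟨k - 1, by omega⟩, ‖x (t + 1)‖⁻¹ • x (t + 1)⟫ ≠ 0 ∧
      ∀ l : Fin d, k ≤ (l : ℕ) →
        (⟪q l, ‖x (t + 1)‖⁻¹ • x (t + 1)⟫ /
            ⟪q ⟨k - 1, by omega⟩, ‖x (t + 1)‖⁻¹ • x (t + 1)⟫) ^ 2 ≤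
          ρ * (⟪q l, ‖x t‖⁻¹ • x t⟫ / ⟪q ⟨k - 1, by omega⟩, ‖x t‖⁻¹ • x t⟫) ^ 2 := by
  have hd0 : 0 < d := by omega
  set κ : Fin d := ⟨k - 1, by omega⟩
  set κ' : Fin d := ⟨k, by omega⟩
  set i0 : Fin d := ⟨0, by omega⟩
  -- eigenvalue facts
  have hmax : ∀ l, lam l ≤ lam i0 := fun l => hmono i0 l (by simp [i0, Fin.le_def])
  have hlam0pos : 0 < lam i0 :=
    lt_of_lt_of_le (lt_of_le_of_lt (hnn κ') hgap) (hmax κ)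
  have halam1 : α * lam i0 < 1 := by
    rw [lt_div_iff₀ hlam0pos] at hα; linarith
  -- β bounds
  set β : ℝ := ⟪x t, matVec C (x t)⟫ / ‖x t‖ ^ 2 with hβdef
  have hnt : (0:ℝ) < ‖x t‖ := norm_pos_iff.mpr (hxnz t)
  have hnt2 : (0:ℝ) < ‖x t‖ ^ 2 := by positivity
  obtain ⟨hray0, hray1⟩ := rayleigh_bound C hCsymm lam q hq heig hd0 hnn (lam i0) hmax (x t)
  have hβ0 : 0 ≤ β := div_nonneg hray0 hnt2.le
  have hβ1 : β ≤ lam i0 := by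
    rw [hβdef, div_le_iff₀ hnt2]
    linarith [hray1]
  -- the multipliers
  set c : Fin d → ℝ := fun l => 1 + α * (lam l - β) with hc
  have hcpos : ∀ l, 0 < c l := by
    intro l
    have h1 : α * β ≤ α * lam i0 := mul_le_mul_of_nonneg_left hβ1 hα0.le
    have h2 : 0 ≤ α * lam l := mul_nonneg hα0.le (hnn l)
    simp only [hc]
    nlinarith
  -- key recursion
  have key : ∀ l : Fin d, k - 1 ≤ (l : ℕ) → ⟪q l, x (t + 1)⟫ = c l * ⟪q l, x t⟫ := by
    intro l hl
    rw [hupd t]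
    have horth : ∀ p : Fin (k - 1),
        ⟪q l, q (Fin.castLE (by omega : k - 1 ≤ d) p)⟫ = 0 := by
      intro p
      refine hq.2 ?_
      intro h
      have : (l : ℕ) = (p : ℕ) := by rw [h]; rfl
      omega
    have hCr : ⟪q l, matVec C (x t)⟫ = lam l * ⟪q l, x t⟫ := by
      rw [← matVec_adjoint C hCsymm, heig, real_inner_smul_left]
    rw [inner_add_right, real_inner_smul_right, inner_sub_right, inner_sub_right,
      real_inner_smul_right, hCr, inner_sum]
    simp only [real_inner_smul_right, horth, mul_zero, Finset.sum_const_zero]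
    simp only [hc, ← hβdef]
    ring
  -- ratio of multipliers
  have hAk : (0:ℝ) < 1 + α * lam κ' := by nlinarith [hnn κ', hα0.le]
  have hAκ : (0:ℝ) < 1 + α * lam κ := by nlinarith [hnn κ, hα0.le]
  have hρlt : ρ < 1 := by
    rw [hρ]
    have h1 : (1 + α * lam κ') / (1 + α * lam κ) < 1 := by
      rw [div_lt_one hAκ]
      nlinarith
    have h0 : 0 ≤ (1 + α * lam κ') / (1 + α * lam κ) := by positivity
    nlinarith
  -- factor bound
  have hfac : ∀ l : Fin d, k ≤ (l : ℕ) → (c l / c κ) ^ 2 ≤ ρ := by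
    intro l hl
    have hll : lam l ≤ lam κ' := hmono κ' l (by rw [Fin.le_def]; exact hl)
    have hκκ : lam κ' ≤ lam κ := hmono κ κ' (Fin.mk_le_mk.mpr (by omega))
    have hdiv : c l / c κ ≤ (1 + α * lam κ') / (1 + α * lam κ) := by
      rw [div_le_div_iff₀ (hcpos κ) hAκ]
      simp only [hc]
      nlinarith [mul_nonneg (mul_nonneg hα0.le hα0.le) (mul_nonneg hβ0 (sub_nonneg.mpr hκκ)),
        mul_nonneg hα0.le (mul_nonneg (hnn κ) (sub_nonneg.mpr hll))]
    have h0 : 0 ≤ c l / c κ := div_nonneg (hcpos l).le (hcpos κ).le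
    rw [hρ]
    exact pow_le_pow_left₀ h0 hdiv 2
  -- normalized inner products
  have hns : ∀ s : ℕ, (‖x s‖⁻¹ : ℝ) ≠ 0 := fun s =>
    inv_ne_zero (norm_ne_zero_iff.mpr (hxnz s))
  have hsm : ∀ (s : ℕ) (l : Fin d), ⟪q l, ‖x s‖⁻¹ • x s⟫ = ‖x s‖⁻¹ * ⟪q l, x s⟫ :=
    fun s l => real_inner_smul_right _ _ _
  have hwκ : ⟪q κ, x t⟫ ≠ 0 := by
    intro h
    apply hzk
    rw [hsm t κ, h, mul_zero]
  have hκk1 : (κ : ℕ) = k - 1 := rfl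
  have hkeyκ : ⟪q κ, x (t + 1)⟫ = c κ * ⟪q κ, x t⟫ := key κ (by omega)
  refine ⟨hρlt, ?_, ?_⟩
  · rw [hsm (t + 1) κ, hkeyκ]
    exact mul_ne_zero (hns (t + 1)) (mul_ne_zero (hcpos κ).ne' hwκ)
  · intro l hl
    rw [hsm (t + 1) l, hsm (t + 1) κ, hsm t l, hsm t κ,
      key l (by omega), hkeyκ,
      mul_div_mul_left _ _ (hns (t + 1)), mul_div_mul_left _ _ (hns t)]
    have hsplit : (c l * ⟪q l, x t⟫) / (c κ * ⟪q κ, x t⟫) =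
        (c l / c κ) * (⟪q l, x t⟫ / ⟪q κ, x t⟫) := (div_mul_div_comm _ _ _ _).symm
    rw [hsplit, mul_pow]
    exact mul_le_mul_of_nonneg_right (hfac l hl) (sq_nonneg _)
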